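/- arXiv:1407.0601 — 4 statements merged into one kernel-verified Lean document; each statement's English description precedes it below -/
import Mathlib

section
/- Let c : ℝ → ℝ^d be a 2π-periodic immersion of class C¹ and let h : ℝ → ℝ be a 2π-periodic continuously differentiable function. Then ‖h‖²_{L^∞} ≤ (2/ℓ_c)·‖h‖²_{L²(ds)} + (ℓ_c/2)·‖D_c h‖²_{L²(ds)}. -/
open scoped Real
open MeasureTheory

/-- A 2π-periodic immersion of class C¹: `c` is C¹, 2π-periodic and has
nonvanishing derivative. -/
def ClosedImmersionC1 {d : ℕ} (c : ℝ → EuclideanSpace ℝ (Fin d)) : Prop :=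
  ContDiff ℝ 1 c ∧ Function.Periodic c (2 * π) ∧ ∀ θ : ℝ, deriv c θ ≠ 0

/-- The derivative of a periodic function is periodic. -/
lemma stmt0_per_deriv {f : ℝ → ℝ} {T : ℝ} (hf : Function.Periodic f T) :
    Function.Periodic (deriv f) T := by
  intro x
  have h1 : (fun y => f (y + T)) = f := funext hf
  rw [← deriv_comp_add_const, h1]

/-- the Poincaré-type inequality
`‖h‖²_{L∞} ≤ (2/ℓ_c)·‖h‖²_{L²(ds)} + (ℓ_c/2)·‖D_c h‖²_{L²(ds)}`. -/
theorem stmt0 (d : ℕ) (hd : 1 ≤ d) (c : ℝ → EuclideanSpace ℝ (Fin d))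
    (hc : ClosedImmersionC1 c)
    (h : ℝ → ℝ) (hh : ContDiff ℝ 1 h) (hhper : Function.Periodic h (2 * π)) :
    (⨆ θ : ℝ, |h θ|) ^ 2 ≤
      2 / (∫ θ in (0:ℝ)..(2 * π), ‖deriv c θ‖) *
        (∫ θ in (0:ℝ)..(2 * π), (h θ) ^ 2 * ‖deriv c θ‖) +
      (∫ θ in (0:ℝ)..(2 * π), ‖deriv c θ‖) / 2 *
        (∫ θ in (0:ℝ)..(2 * π), (deriv h θ / ‖deriv c θ‖) ^ 2 * ‖deriv c θ‖) := by
  obtain ⟨hc1, hcper, hcne⟩ := hc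
  have hwpos : ∀ θ : ℝ, 0 < ‖deriv c θ‖ := fun θ => norm_pos_iff.mpr (hcne θ)
  have hwcont : Continuous fun θ => ‖deriv c θ‖ := (hc1.continuous_deriv le_rfl).norm
  have hπ : (0:ℝ) < 2 * π := by positivity
  set ℓ : ℝ := ∫ θ in (0:ℝ)..(2 * π), ‖deriv c θ‖ with hℓdef
  set A : ℝ := ∫ θ in (0:ℝ)..(2 * π), (h θ) ^ 2 * ‖deriv c θ‖ with hAdef
  set B : ℝ := ∫ θ in (0:ℝ)..(2 * π), (deriv h θ / ‖deriv c θ‖) ^ 2 * ‖deriv c θ‖ with hBdef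
  have hℓpos : 0 < ℓ := by
    refine intervalIntegral.intervalIntegral_pos_of_pos_on
      (hwcont.intervalIntegrable _ _) (fun x _ => hwpos x) hπ
  have hhd : Differentiable ℝ h := hh.differentiable one_ne_zero
  have hh'cont : Continuous (deriv h) := hh.continuous_deriv le_rfl
  have hAcont : Continuous fun θ => (h θ)^2 * ‖deriv c θ‖ :=
    ((hh.continuous).pow 2).mul hwcont
  have hBcont : Continuous fun θ => (deriv h θ / ‖deriv c θ‖)^2 * ‖deriv c θ‖ :=
    ((hh'cont.div hwcont fun θ => (hwpos θ).ne').pow 2).mul hwcont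
  have hA0 : 0 ≤ A := intervalIntegral.integral_nonneg hπ.le
    (fun x _ => mul_nonneg (sq_nonneg _) (hwpos x).le)
  have hB0 : 0 ≤ B := intervalIntegral.integral_nonneg hπ.le
    (fun x _ => mul_nonneg (sq_nonneg _) (hwpos x).le)
  -- the squared function g and its derivative
  set g : ℝ → ℝ := fun t => (h t) ^ 2 with hgdef
  have hgcont : Continuous g := (hh.continuous).pow 2
  have hgper : Function.Periodic g (2 * π) := fun x => by simp [hgdef, hhper x]
  have hgd : ∀ t, HasDerivAt g (2 * h t * deriv h t) t := by
    intro t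
    simpa [mul_comm, mul_assoc, mul_left_comm] using ((hhd t).hasDerivAt.fun_pow 2)
  have hg' : deriv g = fun t => 2 * h t * deriv h t := by
    funext t; exact (hgd t).deriv
  have hg'cont : Continuous (deriv g) := by
    rw [hg']; exact (continuous_const.mul hh.continuous).mul hh'cont
  have hg'per : Function.Periodic (deriv g) (2 * π) := stmt0_per_deriv hgper
  -- the positive part of deriv g
  set P : ℝ → ℝ := fun t => (|deriv g t| + deriv g t) / 2 with hPdef
  have hPcont : Continuous P := ((hg'cont.abs.add hg'cont).div_const 2)
  have hP0 : ∀ t, 0 ≤ P t := fun t => by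
    have := neg_abs_le (deriv g t); simp only [hPdef]; linarith
  have hPle : ∀ t, deriv g t ≤ P t := fun t => by
    have := le_abs_self (deriv g t); simp only [hPdef]; linarith
  have hPper : Function.Periodic P (2 * π) := fun x => by simp only [hPdef, hg'per x]
  -- the integral of `deriv g` over a period vanishes
  have hint0 : ∫ t in (0:ℝ)..(2 * π), deriv g t = 0 := by
    rw [intervalIntegral.integral_deriv_eq_sub (fun x _ => ((hgd x).differentiableAt))
      (hg'cont.intervalIntegrable _ _)]
    have : g (0 + 2 * π) = g 0 := hgper 0
    simp only [zero_add] at this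
    rw [this, sub_self]
  -- pointwise AM-GM bound for |deriv g|
  have key : ∀ t : ℝ, |deriv g t| ≤
      2/ℓ * ((h t)^2 * ‖deriv c t‖) + ℓ/2 * ((deriv h t / ‖deriv c t‖)^2 * ‖deriv c t‖) := by
    intro t
    have hu : 0 < ‖deriv c t‖ := hwpos t
    rw [hg']
    have e1 : (deriv h t / ‖deriv c t‖)^2 * ‖deriv c t‖ = (deriv h t)^2 / ‖deriv c t‖ := by
      field_simp
    rw [e1]
    have hpos : (0:ℝ) < 2 * ℓ * ‖deriv c t‖ := by positivity
    rw [← mul_le_mul_iff_of_pos_right hpos]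
    have expand : (2/ℓ * ((h t)^2 * ‖deriv c t‖) + ℓ/2 * ((deriv h t)^2 / ‖deriv c t‖))
        * (2 * ℓ * ‖deriv c t‖)
        = 4 * ‖deriv c t‖^2 * (h t)^2 + ℓ^2 * (deriv h t)^2 := by
      field_simp; ring
    rw [expand, abs_mul, abs_mul, abs_two]
    nlinarith [sq_nonneg (2 * ‖deriv c t‖ * |h t| - ℓ * |deriv h t|),
      sq_abs (h t), sq_abs (deriv h t), abs_nonneg (h t), abs_nonneg (deriv h t),
      mul_nonneg (abs_nonneg (h t)) (abs_nonneg (deriv h t)), hu, hℓpos]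
  -- bound on the integral of |deriv g|
  have hintabs : ∫ t in (0:ℝ)..(2 * π), |deriv g t| ≤ 2/ℓ * A + ℓ/2 * B := by
    have hRcont : Continuous fun t => 2/ℓ * ((h t)^2 * ‖deriv c t‖)
        + ℓ/2 * ((deriv h t / ‖deriv c t‖)^2 * ‖deriv c t‖) :=
      (continuous_const.mul hAcont).add (continuous_const.mul hBcont)
    have hmono := intervalIntegral.integral_mono_on (μ := volume) hπ.le
      (hg'cont.abs.intervalIntegrable _ _)
      (hRcont.intervalIntegrable _ _)
      (fun t _ => key t)
    calc ∫ t in (0:ℝ)..(2 * π), |deriv g t| ≤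
        ∫ t in (0:ℝ)..(2 * π), (2/ℓ * ((h t)^2 * ‖deriv c t‖)
          + ℓ/2 * ((deriv h t / ‖deriv c t‖)^2 * ‖deriv c t‖)) := hmono
      _ = 2/ℓ * A + ℓ/2 * B := by
          rw [intervalIntegral.integral_add (by
              have hc' : Continuous fun t => 2/ℓ * ((h t)^2 * ‖deriv c t‖) :=
                continuous_const.mul hAcont
              exact hc'.intervalIntegrable _ _)
            (by
              have hc' : Continuous fun t =>
                  ℓ/2 * ((deriv h t / ‖deriv c t‖)^2 * ‖deriv c t‖) :=
                continuous_const.mul hBcont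
              exact hc'.intervalIntegrable _ _),
            intervalIntegral.integral_const_mul, intervalIntegral.integral_const_mul]
  -- bound on the integral of the positive part
  have hintP : ∫ t in (0:ℝ)..(2 * π), P t ≤ 1/ℓ * A + ℓ/4 * B := by
    have : ∫ t in (0:ℝ)..(2 * π), P t
        = ((∫ t in (0:ℝ)..(2 * π), |deriv g t|) + ∫ t in (0:ℝ)..(2 * π), deriv g t) / 2 := by
      simp only [hPdef]
      rw [intervalIntegral.integral_div, intervalIntegral.integral_add
        (hg'cont.abs.intervalIntegrable _ _) (hg'cont.intervalIntegrable _ _)]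
    rw [this, hint0, add_zero]
    have e : 2/ℓ * A + ℓ/2 * B = 2 * (1/ℓ * A + ℓ/4 * B) := by ring
    linarith
  -- a minimum point of g
  obtain ⟨θm, hθmmem, hθmmin⟩ := (isCompact_Icc (a := (0:ℝ)) (b := 2 * π)).exists_isMinOn
    (Set.nonempty_Icc.mpr hπ.le) hgcont.continuousOn
  have hmin : ∀ y : ℝ, g θm ≤ g y := by
    intro y
    obtain ⟨y', hy', hEq⟩ := hgper.exists_mem_Ico hπ y 0
    rw [hEq]
    exact hθmmin (Set.mem_Icc.mpr ⟨hy'.1, by linarith [hy'.2]⟩)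
  -- the minimum is at most the mean
  have hmA : g θm * ℓ ≤ A := by
    have hmono := intervalIntegral.integral_mono_on (μ := volume) hπ.le
      ((continuous_const.mul hwcont).intervalIntegrable _ _)
      (hAcont.intervalIntegrable _ _)
      (fun t _ => by
        have := mul_le_mul_of_nonneg_right (hmin t) (hwpos t).le
        simpa [hgdef] using this)
    calc g θm * ℓ = ∫ t in (0:ℝ)..(2 * π), g θm * ‖deriv c t‖ := by
          rw [intervalIntegral.integral_const_mul]
      _ ≤ A := hmono
  -- pointwise bound on g
  have keypt : ∀ θ : ℝ, g θ ≤ 2/ℓ * A + ℓ/2 * B := by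
    intro θ
    obtain ⟨θ', hθ'mem, hEq⟩ := hgper.exists_mem_Ico hπ θ θm
    have h5 : g θ' - g θm = ∫ t in θm..θ', deriv g t :=
      (intervalIntegral.integral_deriv_eq_sub (fun x _ => (hgd x).differentiableAt)
        (hg'cont.intervalIntegrable _ _)).symm
    have h6 : ∫ t in θm..θ', deriv g t ≤ ∫ t in θm..θ', P t :=
      intervalIntegral.integral_mono_on hθ'mem.1 (hg'cont.intervalIntegrable _ _)
        (hPcont.intervalIntegrable _ _) (fun t _ => hPle t)
    have h7 : ∫ t in θm..θ', P t ≤ ∫ t in θm..(θm + 2 * π), P t :=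
      intervalIntegral.integral_mono_interval le_rfl hθ'mem.1 hθ'mem.2.le
        (MeasureTheory.ae_of_all _ (fun t => hP0 t)) (hPcont.intervalIntegrable _ _)
    have h8 : ∫ t in θm..(θm + 2 * π), P t = ∫ t in (0:ℝ)..(2 * π), P t := by
      have := hPper.intervalIntegral_add_eq θm 0
      simpa using this
    have hgθm : g θm ≤ A / ℓ := by
      rw [le_div_iff₀ hℓpos]; exact hmA
    have : g θ = g θ' := hEq
    have hchain : g θ ≤ g θm + (1/ℓ * A + ℓ/4 * B) := by
      rw [this]
      have := h5 ▸ (h6.trans (h7.trans_eq h8)).trans hintP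
      linarith
    have hℓB : ℓ/4 * B ≤ ℓ/2 * B := by nlinarith
    have hAd : A / ℓ + 1/ℓ * A = 2/ℓ * A := by ring
    calc g θ ≤ g θm + (1/ℓ * A + ℓ/4 * B) := hchain
      _ ≤ 2/ℓ * A + ℓ/2 * B := by linarith
  -- conclude via the supremum
  have hR0 : 0 ≤ 2/ℓ * A + ℓ/2 * B :=
    add_nonneg (mul_nonneg (by positivity) hA0) (mul_nonneg (by positivity) hB0)
  have hsup_le : (⨆ θ : ℝ, |h θ|) ≤ Real.sqrt (2/ℓ * A + ℓ/2 * B) := by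
    refine ciSup_le fun θ => ?_
    rw [← Real.sqrt_sq_eq_abs]
    exact Real.sqrt_le_sqrt (keypt θ)
  have hsup0 : 0 ≤ ⨆ θ : ℝ, |h θ| := Real.iSup_nonneg fun θ => abs_nonneg _
  calc (⨆ θ : ℝ, |h θ|) ^ 2 ≤ (Real.sqrt (2/ℓ * A + ℓ/2 * B)) ^ 2 :=
        pow_le_pow_left₀ hsup0 hsup_le 2
    _ = 2/ℓ * A + ℓ/2 * B := Real.sq_sqrt hR0
end

section
/- Let n ≥ 2, let c : ℝ → ℝ^d be a 2π-periodic immersion of class Cⁿ, let h : ℝ → ℝ be a 2π-periodic function of class Cⁿ, and let 0 ≤ k ≤ n. Then ‖D_c^k h‖²_{L²(ds)} ≤ ‖h‖²_{L²(ds)} + ‖D_c^n h‖²_{L²(ds)}, where D_c^k denotes the k-fold iterate of the arc-length derivative. -/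
open scoped Real
open MeasureTheory

noncomputable def arcDerivS {d : ℕ} (c : ℝ → EuclideanSpace ℝ (Fin d))
    (h : ℝ → ℝ) : ℝ → ℝ :=
  fun θ => deriv h θ / ‖deriv c θ‖

lemma periodic_deriv_my {F : Type*} [NormedAddCommGroup F] [NormedSpace ℝ F] {f : ℝ → F} {T : ℝ}
    (hf : Function.Periodic f T) : Function.Periodic (deriv f) T := by
  intro x
  have h : (fun y => f (y + T)) = f := funext hf
  rw [← deriv_comp_add_const (f := f) (a := T), h]

lemma contDiff_deriv_my {F : Type*} [NormedAddCommGroup F] [NormedSpace ℝ F] {m : ℕ} {f : ℝ → F}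
    (hf : ContDiff ℝ (m+1 : ℕ) f) : ContDiff ℝ (m : ℕ) (deriv f) := by
  have h' : ContDiff ℝ ((m : WithTop ℕ∞) + 1) f := by exact_mod_cast hf
  exact (contDiff_succ_iff_deriv.mp h').2.2

lemma step_ineq {d : ℕ} (c : ℝ → EuclideanSpace ℝ (Fin d))
    (ρcd : ContDiff ℝ (1:ℕ) (fun θ => ‖deriv c θ‖))
    (ρper : Function.Periodic (fun θ => ‖deriv c θ‖) (2*π))
    (ρpos : ∀ θ, 0 < ‖deriv c θ‖)
    (g : ℝ → ℝ) (hg : ContDiff ℝ (2:ℕ) g) (hgper : Function.Periodic g (2*π)) :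
    2 * ∫ θ in (0:ℝ)..(2*π), (arcDerivS c g θ)^2 * ‖deriv c θ‖ ≤
      (∫ θ in (0:ℝ)..(2*π), (g θ)^2 * ‖deriv c θ‖) +
      ∫ θ in (0:ℝ)..(2*π), (arcDerivS c (arcDerivS c g) θ)^2 * ‖deriv c θ‖ := by
  set ρ : ℝ → ℝ := fun θ => ‖deriv c θ‖ with hρ
  have hρne : ∀ θ, ρ θ ≠ 0 := fun θ => (ρpos θ).ne'
  set g1 : ℝ → ℝ := arcDerivS c g with hg1def
  set g2 : ℝ → ℝ := arcDerivS c g1 with hg2def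
  have hdg : ContDiff ℝ (1:ℕ) (deriv g) := contDiff_deriv_my (m := 1) hg
  have hg1 : ContDiff ℝ (1:ℕ) g1 := hdg.div ρcd hρne
  have hdg1 : ContDiff ℝ (0:ℕ) (deriv g1) := contDiff_deriv_my (m := 0) hg1
  have hg2c : Continuous g2 := (hdg1.continuous).div ρcd.continuous hρne
  have hdgper : Function.Periodic (deriv g) (2*π) := periodic_deriv_my hgper
  have hg1per : Function.Periodic g1 (2*π) := hdgper.div ρper
  have hdg1per : Function.Periodic (deriv g1) (2*π) := periodic_deriv_my hg1per
  have hg2per : Function.Periodic g2 (2*π) := hdg1per.div ρper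
  have hEq1 : ∀ θ, deriv g θ = g1 θ * ρ θ := fun θ => (div_mul_cancel₀ _ (hρne θ)).symm
  have hEq2 : ∀ θ, deriv g1 θ = g2 θ * ρ θ := fun θ => (div_mul_cancel₀ _ (hρne θ)).symm
  have hρc : Continuous ρ := ρcd.continuous
  have hgc : Continuous g := hg.continuous
  have hg1c : Continuous g1 := hg1.continuous
  set F : ℝ → ℝ := fun θ => g θ * g1 θ with hFdef
  have hgd : Differentiable ℝ g := hg.differentiable (by norm_num)
  have hg1d : Differentiable ℝ g1 := hg1.differentiable (by norm_num)
  have hF : ContDiff ℝ (1:ℕ) F := (hg.of_le (by norm_num)).mul hg1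
  have hFder : ∀ θ, deriv F θ = g1 θ^2 * ρ θ + g θ * g2 θ * ρ θ := by
    intro θ
    rw [hFdef]
    rw [deriv_fun_mul (hgd θ) (hg1d θ), hEq1 θ, hEq2 θ]
    ring
  have hFderc : Continuous (deriv F) := by
    have : ∀ θ, deriv F θ = g1 θ^2 * ρ θ + g θ * g2 θ * ρ θ := hFder
    rw [funext this]
    fun_prop
  have twopi : (0:ℝ) ≤ 2*π := by positivity
  have hint : (∫ θ in (0:ℝ)..(2*π), deriv F θ) = 0 := by
    rw [intervalIntegral.integral_deriv_eq_sub (fun x _ => (hgd x).fun_mul (hg1d x))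
      (hFderc.intervalIntegrable _ _)]
    have hFper : Function.Periodic F (2*π) := fun x => by
      simp only [hFdef]; rw [hgper x, hg1per x]
    have h0 := hFper 0
    rw [zero_add] at h0
    simp only [hFdef] at h0
    rw [h0, sub_self]
  have int1 : IntervalIntegrable (fun θ => g1 θ^2 * ρ θ) volume 0 (2*π) := by
    apply Continuous.intervalIntegrable; fun_prop
  have int2 : IntervalIntegrable (fun θ => g θ * g2 θ * ρ θ) volume 0 (2*π) := by
    apply Continuous.intervalIntegrable; fun_prop
  have hsplit : (∫ θ in (0:ℝ)..(2*π), g1 θ^2 * ρ θ) +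
      (∫ θ in (0:ℝ)..(2*π), g θ * g2 θ * ρ θ) = 0 := by
    rw [← intervalIntegral.integral_add int1 int2]
    have hcongr : (∫ θ in (0:ℝ)..(2*π), (g1 θ^2 * ρ θ + g θ * g2 θ * ρ θ)) =
        ∫ θ in (0:ℝ)..(2*π), deriv F θ :=
      intervalIntegral.integral_congr (fun x _ => (hFder x).symm)
    rw [hcongr, hint]
  -- main estimate
  have key : 2 * (∫ θ in (0:ℝ)..(2*π), g1 θ^2 * ρ θ)
      = ∫ θ in (0:ℝ)..(2*π), (-2) * (g θ * g2 θ * ρ θ) := by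
    rw [intervalIntegral.integral_const_mul]
    linarith [hsplit]
  have mono : (∫ θ in (0:ℝ)..(2*π), (-2) * (g θ * g2 θ * ρ θ)) ≤
      ∫ θ in (0:ℝ)..(2*π), (g θ^2 * ρ θ + g2 θ^2 * ρ θ) := by
    apply intervalIntegral.integral_mono_on twopi (int2.const_mul _)
    · apply Continuous.intervalIntegrable; fun_prop
    · intro x _
      have h1 : 0 ≤ ρ x := (ρpos x).le
      nlinarith [sq_nonneg (g x + g2 x), sq_nonneg (g x - g2 x)]
  have intg2 : IntervalIntegrable (fun θ => g θ^2 * ρ θ) volume 0 (2*π) := by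
    apply Continuous.intervalIntegrable; fun_prop
  have intg22 : IntervalIntegrable (fun θ => g2 θ^2 * ρ θ) volume 0 (2*π) := by
    apply Continuous.intervalIntegrable; fun_prop
  rw [intervalIntegral.integral_add intg2 intg22] at mono
  calc 2 * ∫ θ in (0:ℝ)..(2*π), g1 θ^2 * ρ θ
      = ∫ θ in (0:ℝ)..(2*π), (-2) * (g θ * g2 θ * ρ θ) := key
    _ ≤ _ := by exact le_trans mono (le_refl _)

lemma seq_convex_bound (n : ℕ) (a : ℕ → ℝ) (ha0 : ∀ j, 0 ≤ a j)
    (hconv : ∀ j, j + 2 ≤ n → 2 * a (j+1) ≤ a j + a (j+2)) :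
    ∀ k, k ≤ n → a k ≤ a 0 + a n := by
  have dmono : ∀ j, j + 2 ≤ n → a (j+1) - a j ≤ a (j+2) - a (j+1) := by
    intro j hj
    have := hconv j hj
    linarith
  have dmono' : ∀ i j, i ≤ j → j + 1 ≤ n → a (i+1) - a i ≤ a (j+1) - a j := by
    intro i j hij
    induction j with
    | zero => intro _; interval_cases i; exact le_rfl
    | succ m ih =>
      intro hm
      rcases Nat.lt_or_ge i (m+1) with hlt | hge
      · have h1 : a (i+1) - a i ≤ a (m+1) - a m := ih (Nat.lt_succ_iff.mp hlt) (by omega)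
        have h2 : a (m+1) - a m ≤ a (m+2) - a (m+1) := dmono m (by omega)
        linarith
      · have : i = m + 1 := le_antisymm hij hge
        subst this; exact le_rfl
  intro k hk
  rcases Nat.eq_zero_or_pos k with rfl | hkpos
  · linarith [ha0 n]
  have tele : ∀ m, a m - a 0 = ∑ j ∈ Finset.range m, (a (j+1) - a j) := by
    intro m; rw [Finset.sum_range_sub]
  rcases le_or_gt (a k) (a 0) with hle | hgt
  · linarith [ha0 n]
  · -- some difference below k is positive
    have hsum : 0 < ∑ j ∈ Finset.range k, (a (j+1) - a j) := by
      rw [← tele]; linarith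
    obtain ⟨j, hj, hjpos⟩ : ∃ j ∈ Finset.range k, 0 < a (j+1) - a j := by
      by_contra hcon
      push_neg at hcon
      have : ∑ j ∈ Finset.range k, (a (j+1) - a j) ≤ 0 :=
        Finset.sum_nonpos fun j hj => hcon j hj
      linarith
    rw [Finset.mem_range] at hj
    have hdk : 0 < a (k-1+1) - a (k-1) := by
      have := dmono' j (k-1) (by omega) (by omega)
      linarith
    rw [show k - 1 + 1 = k by omega] at hdk
    have h2 : a n - a k = ∑ j ∈ Finset.range (n - k), (a (k+j+1) - a (k+j)) := by
      have := Finset.sum_range_sub (f := fun i => a (k + i)) (n := n - k)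
      rw [show k + (n - k) = n by omega] at this
      simp only [Nat.add_zero, ← Nat.add_assoc] at this
      exact this.symm
    have hpos : ∀ i ∈ Finset.range (n - k), 0 ≤ a (k+i+1) - a (k+i) := by
      intro i hi
      rw [Finset.mem_range] at hi
      have := dmono' (k-1) (k+i) (by omega) (by omega)
      rw [show k - 1 + 1 = k by omega] at this
      linarith
    have : 0 ≤ a n - a k := by
      rw [h2]; exact Finset.sum_nonneg hpos
    linarith [ha0 0]

lemma iter_reg {d : ℕ} (c : ℝ → EuclideanSpace ℝ (Fin d)) (n : ℕ) (hn : 1 ≤ n)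
    (ρcd : ContDiff ℝ ((n-1 : ℕ)) (fun θ => ‖deriv c θ‖))
    (ρpos : ∀ θ, 0 < ‖deriv c θ‖)
    (ρper : Function.Periodic (fun θ => ‖deriv c θ‖) (2*π))
    (h : ℝ → ℝ) (hh : ContDiff ℝ (n:ℕ) h) (hhper : Function.Periodic h (2*π)) :
    ∀ j, j ≤ n → ContDiff ℝ ((n - j : ℕ)) ((arcDerivS c)^[j] h) ∧
      Function.Periodic ((arcDerivS c)^[j] h) (2*π) := by
  have hρne : ∀ θ, ‖deriv c θ‖ ≠ 0 := fun θ => (ρpos θ).ne'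
  intro j
  induction j with
  | zero => intro _; simpa using ⟨hh, hhper⟩
  | succ m ih =>
    intro hm
    obtain ⟨hcd, hper⟩ := ih (by omega)
    rw [Function.iterate_succ_apply']
    set g := (arcDerivS c)^[m] h with hgdef
    have h1 : ContDiff ℝ (((n - m - 1 : ℕ) + 1 : ℕ)) g := by
      rw [show (n - m - 1) + 1 = n - m by omega]; exact hcd
    have hd : ContDiff ℝ ((n - m - 1 : ℕ)) (deriv g) := contDiff_deriv_my h1
    have hρ : ContDiff ℝ ((n - m - 1 : ℕ)) (fun θ => ‖deriv c θ‖) :=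
      ρcd.of_le (by exact_mod_cast (by omega : n - m - 1 ≤ n - 1))
    constructor
    · show ContDiff ℝ ((n - (m+1) : ℕ)) (arcDerivS c g)
      rw [show n - (m+1) = n - m - 1 by omega]
      exact hd.div hρ hρne
    · exact (periodic_deriv_my hper).div ρper

/-- for `0 ≤ k ≤ n`,
`‖D_c^k h‖²_{L²(ds)} ≤ ‖h‖²_{L²(ds)} + ‖D_c^n h‖²_{L²(ds)}`. -/
theorem stmt2 (d : ℕ) (hd : 1 ≤ d) (n : ℕ) (hn : 2 ≤ n)
    (c : ℝ → EuclideanSpace ℝ (Fin d))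
    (hc : ContDiff ℝ n c) (hcper : Function.Periodic c (2 * π))
    (hcimm : ∀ θ : ℝ, deriv c θ ≠ 0)
    (h : ℝ → ℝ) (hh : ContDiff ℝ n h) (hhper : Function.Periodic h (2 * π))
    (k : ℕ) (hk : k ≤ n) :
    ∫ θ in (0:ℝ)..(2 * π), ((arcDerivS c)^[k] h θ) ^ 2 * ‖deriv c θ‖ ≤
      (∫ θ in (0:ℝ)..(2 * π), (h θ) ^ 2 * ‖deriv c θ‖) +
      ∫ θ in (0:ℝ)..(2 * π), ((arcDerivS c)^[n] h θ) ^ 2 * ‖deriv c θ‖ := by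
  have ρpos : ∀ θ, 0 < ‖deriv c θ‖ := fun θ => norm_pos_iff.mpr (hcimm θ)
  have hc' : ContDiff ℝ (((n - 1 : ℕ) + 1 : ℕ)) c := by
    rw [show (n - 1) + 1 = n by omega]; exact hc
  have hdc : ContDiff ℝ ((n - 1 : ℕ)) (deriv c) := contDiff_deriv_my hc'
  have ρcd : ContDiff ℝ ((n - 1 : ℕ)) (fun θ => ‖deriv c θ‖) := hdc.norm ℝ hcimm
  have hdcper : Function.Periodic (deriv c) (2 * π) := periodic_deriv_my hcper
  have ρper : Function.Periodic (fun θ => ‖deriv c θ‖) (2 * π) := fun x => by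
    simp only [hdcper x]
  have ρcd1 : ContDiff ℝ ((1:ℕ)) (fun θ => ‖deriv c θ‖) :=
    ρcd.of_le (by exact_mod_cast (by omega : 1 ≤ n - 1))
  have hreg := iter_reg c n (by omega) ρcd ρpos ρper h hh hhper
  set a : ℕ → ℝ :=
    fun j => ∫ θ in (0:ℝ)..(2 * π), ((arcDerivS c)^[j] h θ) ^ 2 * ‖deriv c θ‖ with hadef
  have twopi : (0:ℝ) ≤ 2 * π := by positivity
  have ha0 : ∀ j, 0 ≤ a j := by
    intro j
    apply intervalIntegral.integral_nonneg twopi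
    intro x _
    exact mul_nonneg (sq_nonneg _) (norm_nonneg _)
  have hconv : ∀ j, j + 2 ≤ n → 2 * a (j+1) ≤ a j + a (j+2) := by
    intro j hj
    obtain ⟨hcd, hper⟩ := hreg j (by omega)
    have hg2 : ContDiff ℝ ((2:ℕ)) ((arcDerivS c)^[j] h) :=
      hcd.of_le (by exact_mod_cast (by omega : 2 ≤ n - j))
    have := step_ineq c ρcd1 ρper ρpos ((arcDerivS c)^[j] h) hg2 hper
    have e1 : (arcDerivS c)^[j+1] h = arcDerivS c ((arcDerivS c)^[j] h) :=
      Function.iterate_succ_apply' _ _ _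
    have e2 : (arcDerivS c)^[j+2] h =
        arcDerivS c (arcDerivS c ((arcDerivS c)^[j] h)) := by
      rw [Function.iterate_succ_apply' _ (j+1) h, e1]
    simp only [hadef, e1, e2]
    exact this
  have := seq_convex_bound n a ha0 hconv k hk
  simpa [hadef] using this
end

section
/- Let E and F be real Banach spaces, U ⊆ E open, and g : U × E × E → ℝ continuous such that for every x ∈ U the map g(x,·,·) is a symmetric positive-semidefinite bilinear form; write |v|_x = √(g(x,v,v)). Define the length of a C¹ path γ : [0,1] → U as L(γ) = ∫₀¹ |γ'(t)|_{γ(t)} dt and the distance d(x,y) ∈ [0,∞] as the infimum of L(γ) over all C¹ paths γ in U from x to y. Let f : U → F be continuously Fréchet differentiable and assume that for every y ∈ U and r > 0 there exists C > 0 such that ‖Df(x)v‖_F ≤ C·(1 + ‖f(x)‖_F)·|v|_x holds for all x ∈ U with d(y,x) < r and all v ∈ E. Then for every y ∈ U and r > 0 there exists K > 0 such that ‖f(x₁) − f(x₂)‖_F ≤ K·d(x₁,x₂) for all x₁, x₂ ∈ U with d(y,x₁) < r and d(y,x₂) < r; in particular f is bounded on every such metric ball. -/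
open scoped ENNReal
open MeasureTheory

/-- The length `∫₀¹ |γ'(t)|_{γ(t)} dt` of a C¹ path, measured by a
(possibly weak) Riemannian metric `g`. -/
noncomputable def gPathLength {E : Type*} [NormedAddCommGroup E] [NormedSpace ℝ E]
    (g : E → E → E → ℝ) (γ : ℝ → E) : ℝ :=
  ∫ t in (0:ℝ)..1, Real.sqrt (g (γ t) (deriv γ t) (deriv γ t))

/-- The induced distance in `[0,∞]`: the infimum of lengths of C¹ paths in `U`
joining `x` to `y`. -/
noncomputable def gDist {E : Type*} [NormedAddCommGroup E] [NormedSpace ℝ E]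
    (U : Set E) (g : E → E → E → ℝ) (x y : E) : ℝ≥0∞ :=
  ⨅ (γ : ℝ → E) (_ : ContDiff ℝ 1 γ ∧ (∀ t ∈ Set.Icc (0:ℝ) 1, γ t ∈ U) ∧
      γ 0 = x ∧ γ 1 = y),
    ENNReal.ofReal (gPathLength g γ)

namespace Stmt15Aux

open Real Set intervalIntegral

lemma expNegInvGlue_monotone : Monotone expNegInvGlue := by
  intro x y hxy
  rcases le_or_gt x 0 with hx | hx
  · rw [expNegInvGlue.zero_of_nonpos hx]; exact expNegInvGlue.nonneg y
  · have hy : 0 < y := hx.trans_le hxy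
    have h1 : expNegInvGlue x = Real.exp (-x⁻¹) := by simp [expNegInvGlue, hx.not_ge]
    have h2 : expNegInvGlue y = Real.exp (-y⁻¹) := by simp [expNegInvGlue, hy.not_ge]
    rw [h1, h2]
    exact Real.exp_le_exp.2 (neg_le_neg (inv_anti₀ hx hxy))

lemma smoothTransition_monotone : Monotone Real.smoothTransition := by
  intro x y hxy
  unfold Real.smoothTransition
  rw [div_le_div_iff₀ (Real.smoothTransition.pos_denom x) (Real.smoothTransition.pos_denom y)]
  have h1 := expNegInvGlue_monotone hxy
  have h2 := expNegInvGlue_monotone (by linarith : (1:ℝ) - y ≤ 1 - x)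
  nlinarith [expNegInvGlue.nonneg x, expNegInvGlue.nonneg y, expNegInvGlue.nonneg (1-x),
    expNegInvGlue.nonneg (1-y)]

lemma deriv_nonneg_of_monotone {f : ℝ → ℝ} (hm : Monotone f) (hd : Differentiable ℝ f)
    (x : ℝ) : 0 ≤ deriv f x := by
  have h := (hd x).hasDerivAt
  have ht : Filter.Tendsto (slope f x) (nhdsWithin x (Set.Ioi x)) (nhds (deriv f x)) := by
    refine (hasDerivAt_iff_tendsto_slope.1 h).mono_left ?_
    exact nhdsWithin_mono x fun y hy => (ne_of_gt hy)
  refine ge_of_tendsto ht ?_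
  filter_upwards [self_mem_nhdsWithin] with y hy
  have h1 : 0 < y - x := sub_pos.2 hy
  have h2 : f x ≤ f y := hm (le_of_lt (show x < y from hy))
  rw [slope_def_field]
  exact div_nonneg (by linarith) h1.le

section
variable {E F : Type*} [NormedAddCommGroup E] [NormedSpace ℝ E]
  [NormedAddCommGroup F] [NormedSpace ℝ F]
  {U : Set E} {g : E → E → E → ℝ}

/-- the integrand in the path length -/
noncomputable def mfun (g : E → E → E → ℝ) (γ : ℝ → E) : ℝ → ℝ :=
  fun t => Real.sqrt (g (γ t) (deriv γ t) (deriv γ t))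

lemma gPathLength_eq (γ : ℝ → E) : gPathLength g γ = ∫ t in (0:ℝ)..1, mfun g γ t := rfl

lemma gPathLength_nonneg (γ : ℝ → E) : 0 ≤ gPathLength g γ :=
  intervalIntegral.integral_nonneg zero_le_one fun u _ => Real.sqrt_nonneg _

lemma mfun_contOn
    (hgcont : ContinuousOn (fun p : E × E × E => g p.1 p.2.1 p.2.2)
      (U ×ˢ (Set.univ : Set E) ×ˢ (Set.univ : Set E)))
    {γ : ℝ → E} (hγ : ContDiff ℝ 1 γ) (hγU : ∀ t ∈ Set.Icc (0:ℝ) 1, γ t ∈ U) :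
    ContinuousOn (mfun g γ) (Set.Icc (0:ℝ) 1) := by
  have hd : Continuous (deriv γ) := hγ.continuous_deriv le_rfl
  have hmap : Continuous (fun t => (γ t, deriv γ t, deriv γ t)) :=
    (hγ.continuous).prodMk (hd.prodMk hd)
  have : ContinuousOn (fun t => g (γ t) (deriv γ t) (deriv γ t)) (Set.Icc (0:ℝ) 1) := by
    refine hgcont.comp hmap.continuousOn ?_
    intro t ht
    exact ⟨hγU t ht, trivial, trivial⟩
  exact Real.continuous_sqrt.comp_continuousOn this

lemma sqrt_g_smul
    (hgsymm : ∀ x ∈ U, ∀ v w : E, g x v w = g x w v)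
    (hgsmul : ∀ x ∈ U, ∀ (s : ℝ) (v w : E), g x (s • v) w = s * g x v w)
    {x : E} (hx : x ∈ U) (a : ℝ) (v : E) :
    Real.sqrt (g x (a • v) (a • v)) = |a| * Real.sqrt (g x v v) := by
  have h1 : g x (a • v) (a • v) = a ^ 2 * g x v v := by
    rw [hgsmul x hx, hgsymm x hx, hgsmul x hx]; ring
  rw [h1, Real.sqrt_mul (sq_nonneg a), Real.sqrt_sq_eq_abs]

/-- change of variables for path length integrands -/
lemma reparam_integral
    (hgcont : ContinuousOn (fun p : E × E × E => g p.1 p.2.1 p.2.2)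
      (U ×ˢ (Set.univ : Set E) ×ˢ (Set.univ : Set E)))
    (hgsymm : ∀ x ∈ U, ∀ v w : E, g x v w = g x w v)
    (hgsmul : ∀ x ∈ U, ∀ (s : ℝ) (v w : E), g x (s • v) w = s * g x v w)
    {γ : ℝ → E} (hγ : ContDiff ℝ 1 γ) (hγU : ∀ t ∈ Set.Icc (0:ℝ) 1, γ t ∈ U)
    {φ : ℝ → ℝ} (hφ : ContDiff ℝ 1 φ) (hφ' : ∀ t, 0 ≤ deriv φ t)
    {a b : ℝ} (hab : a ≤ b) (hrange : ∀ t ∈ Set.Icc a b, φ t ∈ Set.Icc (0:ℝ) 1) :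
    (∫ t in a..b, mfun g (γ ∘ φ) t) = ∫ u in φ a..φ b, mfun g γ u := by
  have hγd : Differentiable ℝ γ := hγ.differentiable one_ne_zero
  have hφd : Differentiable ℝ φ := hφ.differentiable one_ne_zero
  have hcomp : ∀ t : ℝ, deriv (γ ∘ φ) t = deriv φ t • deriv γ (φ t) := by
    intro t
    exact (((hγd (φ t)).hasDerivAt).scomp t ((hφd t).hasDerivAt)).deriv
  have key : ∀ t ∈ Set.uIcc a b, mfun g (γ ∘ φ) t = deriv φ t • (mfun g γ ∘ φ) t := by
    intro t ht
    rw [Set.uIcc_of_le hab] at ht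
    have hmem : φ t ∈ Set.Icc (0:ℝ) 1 := hrange t ht
    have hxU : γ (φ t) ∈ U := hγU _ hmem
    show Real.sqrt (g ((γ ∘ φ) t) (deriv (γ ∘ φ) t) (deriv (γ ∘ φ) t)) = _
    rw [hcomp t]
    show Real.sqrt (g (γ (φ t)) _ _) = _
    rw [sqrt_g_smul hgsymm hgsmul hxU]
    simp [mfun, abs_of_nonneg (hφ' t), smul_eq_mul]
  rw [intervalIntegral.integral_congr key]
  exact intervalIntegral.integral_comp_smul_deriv'
    (fun x _ => (hφd x).hasDerivAt)
    ((hφ.continuous_deriv le_rfl).continuousOn)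
    ((mfun_contOn hgcont hγ hγU).mono (by
      rintro u ⟨t, ht, rfl⟩
      exact hrange t (by rwa [Set.uIcc_of_le hab] at ht)))

/-- restriction of a path to `[0,s]`, rescaled -/
lemma restrict_path
    (hgcont : ContinuousOn (fun p : E × E × E => g p.1 p.2.1 p.2.2)
      (U ×ˢ (Set.univ : Set E) ×ˢ (Set.univ : Set E)))
    (hgsymm : ∀ x ∈ U, ∀ v w : E, g x v w = g x w v)
    (hgsmul : ∀ x ∈ U, ∀ (s : ℝ) (v w : E), g x (s • v) w = s * g x v w)
    {γ : ℝ → E} (hγ : ContDiff ℝ 1 γ) (hγU : ∀ t ∈ Set.Icc (0:ℝ) 1, γ t ∈ U)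
    {s : ℝ} (hs : s ∈ Set.Icc (0:ℝ) 1) :
    ∃ c : ℝ → E, ContDiff ℝ 1 c ∧ (∀ t ∈ Set.Icc (0:ℝ) 1, c t ∈ U) ∧
      c 0 = γ 0 ∧ c 1 = γ s ∧
      gPathLength g c = ∫ u in (0:ℝ)..s, mfun g γ u ∧
      gPathLength g c ≤ gPathLength g γ := by
  obtain ⟨hs0, hs1⟩ := hs
  set φ : ℝ → ℝ := fun t => s * t with hφdef
  have hφ : ContDiff ℝ 1 φ := contDiff_const.mul contDiff_id
  have hφderiv : ∀ t, deriv φ t = s := by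
    intro t
    have h := ((hasDerivAt_id t).const_mul s).deriv
    rw [mul_one] at h
    exact h
  refine ⟨γ ∘ φ, hγ.comp hφ, ?_, ?_, ?_, ?_, ?_⟩
  · intro t ht
    exact hγU _ ⟨mul_nonneg hs0 ht.1, mul_le_one₀ hs1 ht.1 ht.2⟩
  · show γ (s * 0) = γ 0; rw [mul_zero]
  · show γ (s * 1) = γ s; rw [mul_one]
  · have := reparam_integral hgcont hgsymm hgsmul hγ hγU hφ
      (fun t => by rw [hφderiv]; exact hs0) zero_le_one
      (fun t ht => ⟨mul_nonneg hs0 ht.1, mul_le_one₀ hs1 ht.1 ht.2⟩)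
    rw [gPathLength_eq]; simpa [hφdef] using this
  · have heq : gPathLength g (γ ∘ φ) = ∫ u in (0:ℝ)..s, mfun g γ u := by
      have := reparam_integral hgcont hgsymm hgsmul hγ hγU hφ
        (fun t => by rw [hφderiv]; exact hs0) zero_le_one
        (fun t ht => ⟨mul_nonneg hs0 ht.1, mul_le_one₀ hs1 ht.1 ht.2⟩)
      rw [gPathLength_eq]; simpa [hφdef] using this
    rw [heq]
    have hint : ContinuousOn (mfun g γ) (Set.Icc (0:ℝ) 1) := mfun_contOn hgcont hγ hγU
    have h1 : IntervalIntegrable (mfun g γ) volume 0 s :=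
      (hint.mono (by rw [Set.uIcc_of_le hs0]; exact Set.Icc_subset_Icc le_rfl hs1)).intervalIntegrable
    have h2 : IntervalIntegrable (mfun g γ) volume s 1 :=
      (hint.mono (by rw [Set.uIcc_of_le hs1]; exact Set.Icc_subset_Icc hs0 le_rfl)).intervalIntegrable
    have hsplit : gPathLength g γ = (∫ u in (0:ℝ)..s, mfun g γ u) + ∫ u in s..(1:ℝ), mfun g γ u :=
      (intervalIntegral.integral_add_adjacent_intervals h1 h2).symm
    have hpos : 0 ≤ ∫ u in s..(1:ℝ), mfun g γ u :=
      intervalIntegral.integral_nonneg hs1 fun u _ => Real.sqrt_nonneg _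
    linarith

/-- concatenation of two C¹ paths, with smooth flattening at the junction -/
lemma concat_path
    (hgcont : ContinuousOn (fun p : E × E × E => g p.1 p.2.1 p.2.2)
      (U ×ˢ (Set.univ : Set E) ×ˢ (Set.univ : Set E)))
    (hgsymm : ∀ x ∈ U, ∀ v w : E, g x v w = g x w v)
    (hgsmul : ∀ x ∈ U, ∀ (s : ℝ) (v w : E), g x (s • v) w = s * g x v w)
    {γ₁ γ₂ : ℝ → E} (h₁ : ContDiff ℝ 1 γ₁) (h₂ : ContDiff ℝ 1 γ₂)
    (hU₁ : ∀ t ∈ Set.Icc (0:ℝ) 1, γ₁ t ∈ U) (hU₂ : ∀ t ∈ Set.Icc (0:ℝ) 1, γ₂ t ∈ U)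
    (hend : γ₁ 1 = γ₂ 0) :
    ∃ c : ℝ → E, ContDiff ℝ 1 c ∧ (∀ t ∈ Set.Icc (0:ℝ) 1, c t ∈ U) ∧
      c 0 = γ₁ 0 ∧ c 1 = γ₂ 1 ∧
      gPathLength g c = gPathLength g γ₁ + gPathLength g γ₂ := by
  set σ := Real.smoothTransition with hσdef
  set φ₁ : ℝ → ℝ := fun t => σ (6 * t - 1) with hφ₁def
  set φ₂ : ℝ → ℝ := fun t => σ (6 * t - 4) with hφ₂def
  have hφ₁c : ContDiff ℝ 1 φ₁ :=
    Real.smoothTransition.contDiff.comp ((contDiff_const.mul contDiff_id).sub contDiff_const)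
  have hφ₂c : ContDiff ℝ 1 φ₂ :=
    Real.smoothTransition.contDiff.comp ((contDiff_const.mul contDiff_id).sub contDiff_const)
  have hφ₁m : Monotone φ₁ := fun a b hab =>
    smoothTransition_monotone (by linarith : 6 * a - 1 ≤ 6 * b - 1)
  have hφ₂m : Monotone φ₂ := fun a b hab =>
    smoothTransition_monotone (by linarith : 6 * a - 4 ≤ 6 * b - 4)
  have hφ₁range : ∀ t, φ₁ t ∈ Set.Icc (0:ℝ) 1 := fun t =>
    ⟨Real.smoothTransition.nonneg _, Real.smoothTransition.le_one _⟩
  have hφ₂range : ∀ t, φ₂ t ∈ Set.Icc (0:ℝ) 1 := fun t =>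
    ⟨Real.smoothTransition.nonneg _, Real.smoothTransition.le_one _⟩
  set A : ℝ → E := γ₁ ∘ φ₁ with hAdef
  set B : ℝ → E := γ₂ ∘ φ₂ with hBdef
  set c : ℝ → E := fun t => if t < 1/2 then A t else B t with hcdef
  have hAc : ∀ t ∈ Set.Iio (7/12 : ℝ), c t = A t := by
    intro t ht
    simp only [Set.mem_Iio] at ht
    show (if t < 1/2 then A t else B t) = A t
    by_cases h : t < 1/2
    · rw [if_pos h]
    · push_neg at h
      have h1 : φ₁ t = 1 := Real.smoothTransition.one_of_one_le (by linarith : (1:ℝ) ≤ 6 * t - 1)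
      have h2 : φ₂ t = 0 := Real.smoothTransition.zero_of_nonpos (by linarith : 6 * t - 4 ≤ 0)
      rw [if_neg (not_lt.2 h)]
      show γ₂ (φ₂ t) = γ₁ (φ₁ t)
      rw [h1, h2, hend]
  have hBc : ∀ t ∈ Set.Ioi (5/12 : ℝ), c t = B t := by
    intro t ht
    simp only [Set.mem_Ioi] at ht
    show (if t < 1/2 then A t else B t) = B t
    by_cases h : t < 1/2
    · have h1 : φ₁ t = 1 := Real.smoothTransition.one_of_one_le (by linarith : (1:ℝ) ≤ 6 * t - 1)
      have h2 : φ₂ t = 0 := Real.smoothTransition.zero_of_nonpos (by linarith : 6 * t - 4 ≤ 0)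
      rw [if_pos h]
      show γ₁ (φ₁ t) = γ₂ (φ₂ t)
      rw [h1, h2, hend]
    · rw [if_neg h]
  have hAcd : ContDiff ℝ 1 A := h₁.comp hφ₁c
  have hBcd : ContDiff ℝ 1 B := h₂.comp hφ₂c
  have hccd : ContDiff ℝ 1 c := by
    rw [contDiff_iff_contDiffAt]
    intro x
    by_cases hx : x < 7/12
    · exact hAcd.contDiffAt.congr_of_eventuallyEq
        (Filter.eventually_of_mem (Iio_mem_nhds hx) hAc)
    · push_neg at hx
      exact hBcd.contDiffAt.congr_of_eventuallyEq
        (Filter.eventually_of_mem (Ioi_mem_nhds (by linarith : (5/12:ℝ) < x)) hBc)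
  have hcU : ∀ t ∈ Set.Icc (0:ℝ) 1, c t ∈ U := by
    intro t _
    by_cases h : t < 1/2
    · show (if t < 1/2 then A t else B t) ∈ U
      rw [if_pos h]; exact hU₁ _ (hφ₁range t)
    · show (if t < 1/2 then A t else B t) ∈ U
      rw [if_neg h]; exact hU₂ _ (hφ₂range t)
  have hc0 : c 0 = γ₁ 0 := by
    show (if (0:ℝ) < 1/2 then A 0 else B 0) = γ₁ 0
    rw [if_pos (by norm_num : (0:ℝ) < 1/2)]
    show γ₁ (φ₁ 0) = γ₁ 0
    rw [show φ₁ 0 = 0 from Real.smoothTransition.zero_of_nonpos (by norm_num)]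
  have hc1 : c 1 = γ₂ 1 := by
    show (if (1:ℝ) < 1/2 then A 1 else B 1) = γ₂ 1
    rw [if_neg (by norm_num : ¬((1:ℝ) < 1/2))]
    show γ₂ (φ₂ 1) = γ₂ 1
    rw [show φ₂ 1 = 1 from Real.smoothTransition.one_of_one_le (by norm_num)]
  have hmcont : ContinuousOn (mfun g c) (Set.Icc (0:ℝ) 1) := mfun_contOn hgcont hccd hcU
  have hsub1 : Set.uIcc (0:ℝ) (1/2) ⊆ Set.Icc (0:ℝ) 1 := by
    rw [Set.uIcc_of_le (by norm_num : (0:ℝ) ≤ 1/2)]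
    exact Set.Icc_subset_Icc le_rfl (by norm_num)
  have hsub2 : Set.uIcc (1/2:ℝ) 1 ⊆ Set.Icc (0:ℝ) 1 := by
    rw [Set.uIcc_of_le (by norm_num : (1/2:ℝ) ≤ 1)]
    exact Set.Icc_subset_Icc (by norm_num) le_rfl
  have hint1 : IntervalIntegrable (mfun g c) volume 0 (1/2) :=
    (hmcont.mono hsub1).intervalIntegrable
  have hint2 : IntervalIntegrable (mfun g c) volume (1/2) 1 :=
    (hmcont.mono hsub2).intervalIntegrable
  have hsplit : gPathLength g c
      = (∫ t in (0:ℝ)..(1/2), mfun g c t) + ∫ t in (1/2:ℝ)..1, mfun g c t :=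
    (intervalIntegral.integral_add_adjacent_intervals hint1 hint2).symm
  have hcongr1 : ∀ t ∈ Set.uIcc (0:ℝ) (1/2), mfun g c t = mfun g A t := by
    intro t ht
    rw [Set.uIcc_of_le (by norm_num : (0:ℝ) ≤ 1/2)] at ht
    have htlt : t ∈ Set.Iio (7/12 : ℝ) := lt_of_le_of_lt ht.2 (by norm_num)
    have hev : c =ᶠ[nhds t] A := Filter.eventually_of_mem (Iio_mem_nhds htlt) hAc
    simp only [mfun, hev.self_of_nhds, hev.deriv_eq]
  have hcongr2 : ∀ t ∈ Set.uIcc (1/2:ℝ) 1, mfun g c t = mfun g B t := by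
    intro t ht
    rw [Set.uIcc_of_le (by norm_num : (1/2:ℝ) ≤ 1)] at ht
    have htlt : t ∈ Set.Ioi (5/12 : ℝ) := lt_of_lt_of_le (by norm_num) ht.1
    have hev : c =ᶠ[nhds t] B := Filter.eventually_of_mem (Ioi_mem_nhds htlt) hBc
    simp only [mfun, hev.self_of_nhds, hev.deriv_eq]
  have hlen1 : (∫ t in (0:ℝ)..(1/2), mfun g c t) = gPathLength g γ₁ := by
    rw [intervalIntegral.integral_congr hcongr1]
    have := reparam_integral hgcont hgsymm hgsmul h₁ hU₁ hφ₁c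
      (fun t => deriv_nonneg_of_monotone hφ₁m (hφ₁c.differentiable one_ne_zero) t)
      (by norm_num : (0:ℝ) ≤ 1/2) (fun t _ => hφ₁range t)
    rw [this, show φ₁ 0 = 0 from Real.smoothTransition.zero_of_nonpos (by norm_num),
      show φ₁ (1/2) = 1 from Real.smoothTransition.one_of_one_le (by norm_num)]
    rfl
  have hlen2 : (∫ t in (1/2:ℝ)..1, mfun g c t) = gPathLength g γ₂ := by
    rw [intervalIntegral.integral_congr hcongr2]
    have := reparam_integral hgcont hgsymm hgsmul h₂ hU₂ hφ₂c
      (fun t => deriv_nonneg_of_monotone hφ₂m (hφ₂c.differentiable one_ne_zero) t)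
      (by norm_num : (1/2:ℝ) ≤ 1) (fun t _ => hφ₂range t)
    rw [this, show φ₂ (1/2) = 0 from Real.smoothTransition.zero_of_nonpos (by norm_num),
      show φ₂ 1 = 1 from Real.smoothTransition.one_of_one_le (by norm_num)]
    rfl
  exact ⟨c, hccd, hcU, hc0, hc1, by rw [hsplit, hlen1, hlen2]⟩

/-- Grönwall-type estimate along a path. -/
lemma gronwall_path
    (hU : IsOpen U)
    (hgcont : ContinuousOn (fun p : E × E × E => g p.1 p.2.1 p.2.2)
      (U ×ˢ (Set.univ : Set E) ×ˢ (Set.univ : Set E)))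
    {f : E → F} (hf : ContDiffOn ℝ 1 f U)
    {γ : ℝ → E} (hγ : ContDiff ℝ 1 γ) (hγU : ∀ t ∈ Set.Icc (0:ℝ) 1, γ t ∈ U)
    {C : ℝ} (hC : 0 < C)
    (hD : ∀ t ∈ Set.Icc (0:ℝ) 1, ∀ v : E,
      ‖fderiv ℝ f (γ t) v‖ ≤ C * (1 + ‖f (γ t)‖) * Real.sqrt (g (γ t) v v))
    {ε : ℝ} (hε : 0 < ε) :
    ‖f (γ 1) - f (γ 0)‖
      ≤ (1 + ‖f (γ 0)‖ + ε) * (Real.exp (C * (gPathLength g γ + ε)) - 1) := by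
  set m : ℝ → ℝ := mfun g γ with hm
  have hmc : ContinuousOn m (Set.Icc (0:ℝ) 1) := mfun_contOn hgcont hγ hγU
  set clamp : ℝ → ℝ := fun t => max 0 (min 1 t) with hclampdef
  have hclampc : Continuous clamp := continuous_const.max (continuous_const.min continuous_id)
  have hclampmem : ∀ t, clamp t ∈ Set.Icc (0:ℝ) 1 := fun t =>
    ⟨le_max_left _ _, max_le zero_le_one (min_le_left _ _)⟩
  have hclampeq : ∀ t ∈ Set.Icc (0:ℝ) 1, clamp t = t := by
    intro t ht
    simp only [hclampdef]
    rw [min_eq_right ht.2, max_eq_right ht.1]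
  set mt : ℝ → ℝ := fun t => m (clamp t) with hmtdef
  have hmtc : Continuous mt := hmc.comp_continuous hclampc hclampmem
  have hmteq : ∀ t ∈ Set.Icc (0:ℝ) 1, mt t = m t := fun t ht => by
    simp only [hmtdef]; rw [hclampeq t ht]
  have hmtnn : ∀ t, 0 ≤ mt t := fun t => Real.sqrt_nonneg _
  set I : ℝ → ℝ := fun t => (∫ u in (0:ℝ)..t, mt u) + ε * t with hIdef
  have hI : ∀ t, HasDerivAt I (mt t + ε) t := by
    intro t
    exact ((hmtc.integral_hasStrictDerivAt 0 t).hasDerivAt).add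
      (by simpa using ((hasDerivAt_id t).const_mul ε))
  set h₀ : ℝ := ‖f (γ 0)‖ with hh₀
  have hh₀nn : 0 ≤ h₀ := norm_nonneg _
  set P : ℝ → ℝ := fun t => (1 + h₀ + ε) * Real.exp (C * I t) with hPdef
  have hPpos : ∀ t, 0 < P t := fun t =>
    mul_pos (by linarith) (Real.exp_pos _)
  have hP : ∀ t, HasDerivAt P ((1 + h₀ + ε) * (Real.exp (C * I t) * (C * (mt t + ε)))) t := by
    intro t
    exact (((hI t).const_mul C).exp).const_mul _
  set F' : ℝ → F := fun t => fderiv ℝ f (γ t) (deriv γ t) with hF'def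
  have hFd : ∀ t ∈ Set.Icc (0:ℝ) 1, HasDerivAt (fun s => f (γ s)) (F' t) t := by
    intro t ht
    have hdf : DifferentiableAt ℝ f (γ t) :=
      (hf.contDiffAt (hU.mem_nhds (hγU t ht))).differentiableAt one_ne_zero
    exact hdf.hasFDerivAt.comp_hasDerivAt t ((hγ.differentiable one_ne_zero) t).hasDerivAt
  have hFc : ContinuousOn (fun s => f (γ s)) (Set.Icc (0:ℝ) 1) :=
    fun t ht => ((hFd t ht).continuousAt).continuousWithinAt
  have hF'bd : ∀ t ∈ Set.Icc (0:ℝ) 1, ‖F' t‖ ≤ C * (1 + ‖f (γ t)‖) * m t := fun t ht =>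
    hD t ht (deriv γ t)
  have step1 : ∀ t ∈ Set.Icc (0:ℝ) 1, ‖f (γ t)‖ ≤ P t - 1 := by
    refine image_norm_le_of_norm_deriv_right_lt_deriv_boundary hFc
      (fun t ht => (hFd t (Set.mem_Icc_of_Ico ht)).hasDerivWithinAt)
      (B := fun t => P t - 1)
      (B' := fun t => (1 + h₀ + ε) * (Real.exp (C * I t) * (C * (mt t + ε)))) ?_
      (fun t => (hP t).sub_const 1) ?_
    · have : I 0 = 0 := by simp [hIdef]
      simp only [hPdef, this, mul_zero, Real.exp_zero, mul_one]
      linarith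
    · intro t ht heq
      have ht' : t ∈ Set.Icc (0:ℝ) 1 := Set.mem_Icc_of_Ico ht
      have h1 : ‖F' t‖ ≤ C * P t * m t := by
        have := hF'bd t ht'
        rw [heq] at this
        calc ‖F' t‖ ≤ C * (1 + (P t - 1)) * m t := this
        _ = C * P t * m t := by ring_nf
      have h2 : C * P t * m t < (1 + h₀ + ε) * (Real.exp (C * I t) * (C * (mt t + ε))) := by
        rw [hmteq t ht']
        have : (1 + h₀ + ε) * (Real.exp (C * I t) * (C * (m t + ε)))
            = C * P t * m t + C * P t * ε := by simp only [hPdef]; ring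
        rw [this]
        have : 0 < C * P t * ε := mul_pos (mul_pos hC (hPpos t)) hε
        linarith
      exact lt_of_le_of_lt h1 h2
  have step2 : ∀ t ∈ Set.Icc (0:ℝ) 1, ‖f (γ t) - f (γ 0)‖ ≤ P t - (1 + h₀ + ε) := by
    refine image_norm_le_of_norm_deriv_right_lt_deriv_boundary
      (hFc.sub continuousOn_const)
      (fun t ht => ((hFd t (Set.mem_Icc_of_Ico ht)).sub_const _).hasDerivWithinAt)
      (B := fun t => P t - (1 + h₀ + ε))
      (B' := fun t => (1 + h₀ + ε) * (Real.exp (C * I t) * (C * (mt t + ε)))) ?_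
      (fun t => (hP t).sub_const _) ?_
    · have : I 0 = 0 := by simp [hIdef]
      simp [hPdef, this, mul_zero, Real.exp_zero, mul_one]
    · intro t ht _
      have ht' : t ∈ Set.Icc (0:ℝ) 1 := Set.mem_Icc_of_Ico ht
      have h1 : ‖F' t‖ ≤ C * P t * m t := by
        have hb := hF'bd t ht'
        have hs := step1 t ht'
        have hmnn : 0 ≤ m t := Real.sqrt_nonneg _
        calc ‖F' t‖ ≤ C * (1 + ‖f (γ t)‖) * m t := hb
        _ ≤ C * (1 + (P t - 1)) * m t := by
            apply mul_le_mul_of_nonneg_right _ hmnn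
            apply mul_le_mul_of_nonneg_left _ hC.le
            linarith
        _ = C * P t * m t := by ring_nf
      have h2 : C * P t * m t < (1 + h₀ + ε) * (Real.exp (C * I t) * (C * (mt t + ε))) := by
        rw [hmteq t ht']
        have : (1 + h₀ + ε) * (Real.exp (C * I t) * (C * (m t + ε)))
            = C * P t * m t + C * P t * ε := by simp only [hPdef]; ring
        rw [this]
        have : 0 < C * P t * ε := mul_pos (mul_pos hC (hPpos t)) hε
        linarith
      exact lt_of_le_of_lt h1 h2
  have hI1 : I 1 = gPathLength g γ + ε := by
    have : (∫ u in (0:ℝ)..1, mt u) = ∫ u in (0:ℝ)..1, m u := by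
      apply intervalIntegral.integral_congr
      intro u hu
      rw [Set.uIcc_of_le zero_le_one] at hu
      exact hmteq u hu
    simp only [hIdef, this, mul_one]
    rfl
  have hfin := step2 1 (by norm_num)
  rw [show P 1 = (1 + h₀ + ε) * Real.exp (C * (gPathLength g γ + ε)) by
    simp only [hPdef, hI1]] at hfin
  calc ‖f (γ 1) - f (γ 0)‖
      ≤ (1 + h₀ + ε) * Real.exp (C * (gPathLength g γ + ε)) - (1 + h₀ + ε) := hfin
  _ = (1 + h₀ + ε) * (Real.exp (C * (gPathLength g γ + ε)) - 1) := by ring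

end
end Stmt15Aux

/-- if the derivative of `f` satisfies the bound
`‖Df(x)v‖ ≤ C (1 + ‖f x‖) |v|_x` uniformly on metric balls, then `f` is
Lipschitz on metric balls with respect to the induced distance, and in
particular bounded on every metric ball. -/
theorem stmt15 {E F : Type*}
    [NormedAddCommGroup E] [NormedSpace ℝ E] [CompleteSpace E]
    [NormedAddCommGroup F] [NormedSpace ℝ F] [CompleteSpace F]
    (U : Set E) (hU : IsOpen U) (g : E → E → E → ℝ)
    (hgcont : ContinuousOn (fun p : E × E × E => g p.1 p.2.1 p.2.2)
      (U ×ˢ (Set.univ : Set E) ×ˢ (Set.univ : Set E)))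
    (hgsymm : ∀ x ∈ U, ∀ v w : E, g x v w = g x w v)
    (hgadd : ∀ x ∈ U, ∀ u v w : E, g x (u + v) w = g x u w + g x v w)
    (hgsmul : ∀ x ∈ U, ∀ (s : ℝ) (v w : E), g x (s • v) w = s * g x v w)
    (hgpsd : ∀ x ∈ U, ∀ v : E, 0 ≤ g x v v)
    (f : E → F) (hf : ContDiffOn ℝ 1 f U)
    (hbound : ∀ y ∈ U, ∀ r > (0:ℝ), ∃ C > (0:ℝ), ∀ x ∈ U,
      gDist U g y x < ENNReal.ofReal r → ∀ v : E,
        ‖fderiv ℝ f x v‖ ≤ C * (1 + ‖f x‖) * Real.sqrt (g x v v)) :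
    (∀ y ∈ U, ∀ r > (0:ℝ), ∃ K > (0:ℝ), ∀ x₁ ∈ U, ∀ x₂ ∈ U,
      gDist U g y x₁ < ENNReal.ofReal r → gDist U g y x₂ < ENNReal.ofReal r →
      ENNReal.ofReal ‖f x₁ - f x₂‖ ≤ ENNReal.ofReal K * gDist U g x₁ x₂) ∧
    ∀ y ∈ U, ∀ r > (0:ℝ), ∃ M : ℝ, ∀ x ∈ U,
      gDist U g y x < ENNReal.ofReal r → ‖f x‖ ≤ M := by
  classical
  open Stmt15Aux in
  -- basic interface to `gDist`
  have gdist_le : ∀ (x y : E) (γ : ℝ → E), ContDiff ℝ 1 γ →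
      (∀ t ∈ Set.Icc (0:ℝ) 1, γ t ∈ U) → γ 0 = x → γ 1 = y →
      gDist U g x y ≤ ENNReal.ofReal (gPathLength g γ) := by
    intro x y γ h1 h2 h3 h4
    exact iInf_le_of_le γ (iInf_le _ ⟨h1, h2, h3, h4⟩)
  have exists_path : ∀ (x y : E) (c : ℝ≥0∞), gDist U g x y < c →
      ∃ γ : ℝ → E, ContDiff ℝ 1 γ ∧ (∀ t ∈ Set.Icc (0:ℝ) 1, γ t ∈ U) ∧
        γ 0 = x ∧ γ 1 = y ∧ ENNReal.ofReal (gPathLength g γ) < c := by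
    intro x y c h
    rw [gDist, iInf_lt_iff] at h
    obtain ⟨γ, h⟩ := h
    rw [iInf_lt_iff] at h
    obtain ⟨⟨h1, h2, h3, h4⟩, h5⟩ := h
    exact ⟨γ, h1, h2, h3, h4, h5⟩
  -- triangle-type estimate : points along a path starting at the endpoint of another path
  have tri : ∀ (α γ : ℝ → E), ContDiff ℝ 1 α → (∀ t ∈ Set.Icc (0:ℝ) 1, α t ∈ U) →
      ContDiff ℝ 1 γ → (∀ t ∈ Set.Icc (0:ℝ) 1, γ t ∈ U) → α 1 = γ 0 →
      ∀ t ∈ Set.Icc (0:ℝ) 1,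
        gDist U g (α 0) (γ t) ≤ ENNReal.ofReal (gPathLength g α + gPathLength g γ) := by
    intro α γ hα hαU hγ hγU hend t ht
    obtain ⟨ρ, hρ1, hρU, hρ0, hρ1', _, hρle⟩ :=
      restrict_path hgcont hgsymm hgsmul hγ hγU ht
    obtain ⟨c, hc1, hcU, hc0, hc1', hclen⟩ :=
      concat_path hgcont hgsymm hgsmul hα hρ1 hαU hρU (by rw [hend, hρ0])
    refine le_trans (gdist_le _ _ c hc1 hcU hc0 (by rw [hc1', hρ1'])) ?_
    apply ENNReal.ofReal_le_ofReal
    rw [hclen]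
    linarith
  -- points along a single path starting at `y`
  have selfball : ∀ (γ : ℝ → E), ContDiff ℝ 1 γ → (∀ t ∈ Set.Icc (0:ℝ) 1, γ t ∈ U) →
      ∀ t ∈ Set.Icc (0:ℝ) 1,
        gDist U g (γ 0) (γ t) ≤ ENNReal.ofReal (gPathLength g γ) := by
    intro γ hγ hγU t ht
    obtain ⟨ρ, hρ1, hρU, hρ0, hρ1', _, hρle⟩ :=
      restrict_path hgcont hgsymm hgsmul hγ hγU ht
    refine le_trans (gdist_le _ _ ρ hρ1 hρU hρ0 hρ1') ?_
    exact ENNReal.ofReal_le_ofReal hρle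
  -- Part 2 : boundedness, with explicit nonnegative bound
  have bdd : ∀ y ∈ U, ∀ r > (0:ℝ), ∃ M : ℝ, 0 ≤ M ∧ ∀ x ∈ U,
      gDist U g y x < ENNReal.ofReal r → ‖f x‖ ≤ M := by
    intro y hy r hr
    obtain ⟨C, hC, hCb⟩ := hbound y hy r hr
    refine ⟨‖f y‖ + (2 + ‖f y‖) * Real.exp (C * (r + 1)), by positivity, ?_⟩
    intro x hx hdx
    obtain ⟨γ, hγ1, hγU, hγ0, hγ1', hlen⟩ := exists_path y x _ hdx
    have hlnn : 0 ≤ gPathLength g γ := gPathLength_nonneg γ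
    have hlr : gPathLength g γ < r := (ENNReal.ofReal_lt_ofReal_iff hr).1 hlen
    have hball : ∀ t ∈ Set.Icc (0:ℝ) 1, gDist U g y (γ t) < ENNReal.ofReal r := by
      intro t ht
      calc gDist U g y (γ t) = gDist U g (γ 0) (γ t) := by rw [hγ0]
      _ ≤ ENNReal.ofReal (gPathLength g γ) := selfball γ hγ1 hγU t ht
      _ < ENNReal.ofReal r := hlen
    have hD : ∀ t ∈ Set.Icc (0:ℝ) 1, ∀ v : E,
        ‖fderiv ℝ f (γ t) v‖ ≤ C * (1 + ‖f (γ t)‖) * Real.sqrt (g (γ t) v v) :=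
      fun t ht v => hCb (γ t) (hγU t ht) (hball t ht) v
    have hgr := gronwall_path hU hgcont hf hγ1 hγU hC hD (ε := 1) one_pos
    rw [hγ0, hγ1'] at hgr
    have hnorm : ‖f x‖ - ‖f y‖ ≤ ‖f x - f y‖ := norm_sub_norm_le _ _
    have hexp : Real.exp (C * (gPathLength g γ + 1)) - 1 ≤ Real.exp (C * (r + 1)) := by
      have : Real.exp (C * (gPathLength g γ + 1)) ≤ Real.exp (C * (r + 1)) :=
        Real.exp_le_exp.2 (mul_le_mul_of_nonneg_left (by linarith) hC.le)
      linarith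
    have hpos : (0:ℝ) ≤ 1 + ‖f y‖ + 1 := by positivity
    have h1 : ‖f x - f y‖ ≤ (2 + ‖f y‖) * Real.exp (C * (r + 1)) := by
      calc ‖f x - f y‖ ≤ (1 + ‖f y‖ + 1) * (Real.exp (C * (gPathLength g γ + 1)) - 1) := hgr
      _ ≤ (1 + ‖f y‖ + 1) * Real.exp (C * (r + 1)) := mul_le_mul_of_nonneg_left hexp hpos
      _ = (2 + ‖f y‖) * Real.exp (C * (r + 1)) := by ring
    linarith
  refine ⟨?_, fun y hy r hr => (bdd y hy r hr).imp fun M hM => hM.2⟩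
  -- Part 1 : Lipschitz estimate
  intro y hy r hr
  obtain ⟨M, hM0, hMb⟩ := bdd y hy r hr
  obtain ⟨C, hC, hCb⟩ := hbound y hy (3*r + 2) (by linarith)
  set K₀ : ℝ := C * (2 + M) * Real.exp (C * (2*r + 2)) with hK₀def
  have hK₀ : 0 < K₀ := by positivity
  set K : ℝ := K₀ + M / r + 1 with hKdef
  have hMr : 0 ≤ M / r := div_nonneg hM0 hr.le
  have hK : 0 < K := by positivity
  refine ⟨K, hK, ?_⟩
  intro x₁ hx₁ x₂ hx₂ hd₁ hd₂
  by_cases hDbig : ENNReal.ofReal (2*r) ≤ gDist U g x₁ x₂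
  · have h2M : ‖f x₁ - f x₂‖ ≤ 2 * M := by
      have hb1 := hMb x₁ hx₁ hd₁
      have hb2 := hMb x₂ hx₂ hd₂
      have := norm_sub_le (f x₁) (f x₂)
      linarith
    have hqr : (M / r) * r = M := div_mul_cancel₀ M hr.ne'
    calc ENNReal.ofReal ‖f x₁ - f x₂‖ ≤ ENNReal.ofReal (K * (2*r)) :=
          ENNReal.ofReal_le_ofReal (by rw [hKdef]; nlinarith [hqr, hK₀, hr, hMr])
    _ = ENNReal.ofReal K * ENNReal.ofReal (2*r) := ENNReal.ofReal_mul hK.le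
    _ ≤ ENNReal.ofReal K * gDist U g x₁ x₂ := mul_le_mul_right hDbig _
  · push_neg at hDbig
    have hDlt : gDist U g x₁ x₂ < ⊤ := hDbig.trans ENNReal.ofReal_lt_top
    refine ENNReal.le_of_forall_pos_le_add ?_
    intro δ hδ _
    have hδR : (0:ℝ) < (δ:ℝ) := hδ
    set η : ℝ := min 1 ((δ:ℝ) / (2*K)) with hηdef
    have hη0 : 0 < η := lt_min one_pos (div_pos hδR (by linarith))
    have hη1 : η ≤ 1 := min_le_left _ _
    have hηδ : η ≤ (δ:ℝ) / (2*K) := min_le_right _ _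
    have hlt : gDist U g x₁ x₂ < gDist U g x₁ x₂ + ENNReal.ofReal η :=
      ENNReal.lt_add_right hDlt.ne (by simp [ENNReal.ofReal_pos, hη0])
    obtain ⟨γ, hγ1, hγU, hγ0, hγ1', hlen⟩ := exists_path x₁ x₂ _ hlt
    set L : ℝ := gPathLength g γ with hLdef
    have hlnn : 0 ≤ L := gPathLength_nonneg γ
    have hLlt : ENNReal.ofReal L < ENNReal.ofReal (2*r) + ENNReal.ofReal η :=
      hlen.trans_le (add_le_add_left hDbig.le _)
    have hL : L < 2*r + η := by
      rw [← ENNReal.ofReal_add (by linarith) hη0.le] at hLlt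
      exact (ENNReal.ofReal_lt_ofReal_iff (by linarith)).1 hLlt
    have hL1 : L ≤ 2*r + 1 := by linarith
    obtain ⟨α, hα1, hαU, hα0, hα1', hαlen⟩ := exists_path y x₁ _ hd₁
    have hαnn : 0 ≤ gPathLength g α := gPathLength_nonneg α
    have hαr : gPathLength g α < r := (ENNReal.ofReal_lt_ofReal_iff hr).1 hαlen
    have hball : ∀ t ∈ Set.Icc (0:ℝ) 1, gDist U g y (γ t) < ENNReal.ofReal (3*r + 2) := by
      intro t ht
      have h1 : α 1 = γ 0 := by rw [hα1', hγ0]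
      have h2 := tri α γ hα1 hαU hγ1 hγU h1 t ht
      rw [hα0] at h2
      refine lt_of_le_of_lt h2 ?_
      exact (ENNReal.ofReal_lt_ofReal_iff (by linarith)).2 (by linarith)
    have hD : ∀ t ∈ Set.Icc (0:ℝ) 1, ∀ v : E,
        ‖fderiv ℝ f (γ t) v‖ ≤ C * (1 + ‖f (γ t)‖) * Real.sqrt (g (γ t) v v) :=
      fun t ht v => hCb (γ t) (hγU t ht) (hball t ht) v
    have hgr := gronwall_path hU hgcont hf hγ1 hγU hC hD hη0
    rw [hγ0, hγ1'] at hgr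
    have hfx₁ : ‖f x₁‖ ≤ M := hMb x₁ hx₁ hd₁
    have hLη : 0 ≤ L + η := by linarith
    have he1 : Real.exp (C * (L + η)) - 1 ≤ C * (L + η) * Real.exp (C * (L + η)) := by
      have h := Real.add_one_le_exp (-(C * (L + η)))
      have hepos := Real.exp_pos (C * (L + η))
      have hmul : Real.exp (-(C * (L + η))) * Real.exp (C * (L + η)) = 1 := by
        rw [← Real.exp_add]; simp
      nlinarith
    have he2 : Real.exp (C * (L + η)) ≤ Real.exp (C * (2*r + 2)) :=
      Real.exp_le_exp.2 (mul_le_mul_of_nonneg_left (by linarith) hC.le)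
    have hem1 : 0 ≤ Real.exp (C * (L + η)) - 1 := by
      have : (1:ℝ) ≤ Real.exp (C * (L + η)) := Real.one_le_exp (by positivity)
      linarith
    have hfinal : ‖f x₂ - f x₁‖ ≤ K₀ * (L + η) := by
      calc ‖f x₂ - f x₁‖ ≤ (1 + ‖f x₁‖ + η) * (Real.exp (C * (L + η)) - 1) := hgr
      _ ≤ (2 + M) * (Real.exp (C * (L + η)) - 1) :=
          mul_le_mul_of_nonneg_right (by linarith) hem1
      _ ≤ (2 + M) * (C * (L + η) * Real.exp (C * (2*r + 2))) := by
          refine mul_le_mul_of_nonneg_left ?_ (by linarith)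
          calc Real.exp (C * (L + η)) - 1 ≤ C * (L + η) * Real.exp (C * (L + η)) := he1
          _ ≤ C * (L + η) * Real.exp (C * (2*r + 2)) :=
              mul_le_mul_of_nonneg_left he2 (by positivity)
      _ = K₀ * (L + η) := by rw [hK₀def]; ring
    have hKK₀ : K₀ ≤ K := by rw [hKdef]; linarith
    calc ENNReal.ofReal ‖f x₁ - f x₂‖ = ENNReal.ofReal ‖f x₂ - f x₁‖ := by rw [norm_sub_rev]
    _ ≤ ENNReal.ofReal (K * (L + η)) := ENNReal.ofReal_le_ofReal
        (hfinal.trans (mul_le_mul_of_nonneg_right hKK₀ hLη))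
    _ = ENNReal.ofReal K * (ENNReal.ofReal L + ENNReal.ofReal η) := by
        rw [ENNReal.ofReal_mul hK.le, ENNReal.ofReal_add hlnn hη0.le]
    _ ≤ ENNReal.ofReal K * ((gDist U g x₁ x₂ + ENNReal.ofReal η) + ENNReal.ofReal η) :=
        mul_le_mul_right (add_le_add_left hlen.le _) _
    _ = ENNReal.ofReal K * gDist U g x₁ x₂
        + ENNReal.ofReal K * (ENNReal.ofReal η + ENNReal.ofReal η) := by
        rw [add_assoc, mul_add]
    _ ≤ ENNReal.ofReal K * gDist U g x₁ x₂ + δ := by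
        refine add_le_add_right ?_ _
        rw [← ENNReal.ofReal_add hη0.le hη0.le, ← ENNReal.ofReal_mul hK.le]
        calc ENNReal.ofReal (K * (η + η)) ≤ ENNReal.ofReal (δ:ℝ) := by
              refine ENNReal.ofReal_le_ofReal ?_
              have : K * (η + η) = 2 * K * η := by ring
              rw [this]
              calc 2 * K * η ≤ 2 * K * ((δ:ℝ) / (2*K)) :=
                    mul_le_mul_of_nonneg_left hηδ (by positivity)
              _ = (δ:ℝ) := by field_simp
        _ = (δ : ℝ≥0∞) := ENNReal.ofReal_coe_nnreal
end

section
/- Let E and E₀ be separable real Hilbert spaces and let i : E → E₀ be a continuous injective linear map with dense range. Then there exists a sequence of continuous linear operators Pₙ : E₀ → E such that for every x ∈ E₀ one has ‖i(Pₙ x) − x‖_{E₀} → 0 as n → ∞, and the convergence is uniform on compact subsets of E₀, i.e. for every compact set K ⊆ E₀, sup_{x ∈ K} ‖i(Pₙ x) − x‖_{E₀} → 0. -/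
open Filter Topology

/-- Distance to the orthogonal projection is at most the distance to any point of the
subspace. -/
lemma aux_proj_le {𝕜 E : Type*} [RCLike 𝕜] [NormedAddCommGroup E] [InnerProductSpace 𝕜 E]
    {U : Submodule 𝕜 E} [Submodule.HasOrthogonalProjection U] (x : E) {y : E} (hy : y ∈ U) :
    ‖x - (Submodule.orthogonalProjection U x : E)‖ ≤ ‖x - y‖ := by
  rw [← Submodule.starProjection_apply, Submodule.starProjection_minimal]
  exact ciInf_le ⟨0, fun r ⟨z, hz⟩ => hz ▸ norm_nonneg _⟩ (⟨y, hy⟩ : U)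

/-- if a separable Hilbert space `E` is continuously and densely
embedded in a separable Hilbert space `E₀` via `i`, then there is a sequence
of bounded operators `Pₙ : E₀ → E` with `i (Pₙ x) → x` for every `x ∈ E₀`,
uniformly on compact subsets of `E₀`. -/
theorem stmt18 {E E₀ : Type*}
    [NormedAddCommGroup E] [InnerProductSpace ℝ E] [CompleteSpace E]
    [TopologicalSpace.SeparableSpace E]
    [NormedAddCommGroup E₀] [InnerProductSpace ℝ E₀] [CompleteSpace E₀]
    [TopologicalSpace.SeparableSpace E₀]
    (i : E →L[ℝ] E₀) (hi : Function.Injective i) (hd : DenseRange i) :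
    ∃ P : ℕ → (E₀ →L[ℝ] E),
      (∀ x : E₀, Tendsto (fun n => ‖i (P n x) - x‖) atTop (𝓝 0)) ∧
      ∀ K : Set E₀, IsCompact K → ∀ ε > (0:ℝ), ∃ N : ℕ, ∀ n ≥ N, ∀ x ∈ K,
        ‖i (P n x) - x‖ < ε := by
  obtain ⟨v, hv⟩ : ∃ v : ℕ → E, DenseRange v :=
    ⟨TopologicalSpace.denseSeq E, TopologicalSpace.denseRange_denseSeq E⟩
  -- finite-dimensional spaces spanned by the first `n` points
  set F : ℕ → Submodule ℝ E := fun n => Submodule.span ℝ (v '' Set.Iio n) with hF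
  have hFmono : Monotone F := fun m n hmn =>
    Submodule.span_mono (Set.image_mono (Set.Iio_subset_Iio hmn))
  have hFfin : ∀ n, FiniteDimensional ℝ (F n) := fun n =>
    FiniteDimensional.span_of_finite ℝ ((Set.finite_Iio n).image v)
  set G : ℕ → Submodule ℝ E₀ := fun n => (F n).map (i : E →ₗ[ℝ] E₀) with hG
  have hGfin : ∀ n, FiniteDimensional ℝ (G n) := fun n => by
    haveI := hFfin n; exact Module.Finite.map (F n) (i : E →ₗ[ℝ] E₀)
  haveI : ∀ n, Submodule.HasOrthogonalProjection (G n) := fun n => by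
    haveI := hGfin n
    haveI : CompleteSpace (G n) := FiniteDimensional.complete ℝ (G n)
    infer_instance
  have hGmono : Monotone G := fun m n hmn => Submodule.map_mono (hFmono hmn)
  -- the linear equivalences and the operators
  set e : ∀ n, F n ≃ₗ[ℝ] G n := fun n =>
    Submodule.equivMapOfInjective (i : E →ₗ[ℝ] E₀) hi (F n) with he
  set P : ℕ → (E₀ →L[ℝ] E) := fun n =>
    haveI := hGfin n
    (LinearMap.toContinuousLinearMap
      ((F n).subtype ∘ₗ (e n).symm.toLinearMap)).comp (Submodule.orthogonalProjection (G n)) with hP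
  have hkey : ∀ n x, i (P n x) = (Submodule.orthogonalProjection (G n) x : E₀) := by
    intro n x
    simp only [hP, ContinuousLinearMap.comp_apply, LinearMap.coe_toContinuousLinearMap',
      LinearMap.comp_apply, LinearEquiv.coe_coe, Submodule.coe_subtype]
    exact Submodule.map_equivMapOfInjective_symm_apply (i : E →ₗ[ℝ] E₀) hi (F n) _
  -- density of the union of the `G n`
  have hdense : Dense (⋃ n, (G n : Set E₀)) := by
    have hFunion : Dense (⋃ n, (F n : Set E)) := by
      have h1 : Submodule.span ℝ (Set.range v) ≤ ⨆ n, F n := by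
        rw [Submodule.span_le]
        rintro _ ⟨k, rfl⟩
        exact Submodule.mem_iSup_of_mem (k + 1)
          (Submodule.subset_span ⟨k, Nat.lt_succ_self k, rfl⟩)
      have h2 : ((⨆ n, F n : Submodule ℝ E) : Set E) = ⋃ n, (F n : Set E) :=
        Submodule.coe_iSup_of_chain ⟨F, hFmono⟩
      have h3 : Dense ((Submodule.span ℝ (Set.range v) : Submodule ℝ E) : Set E) :=
        hv.mono Submodule.subset_span
      exact h3.mono (h2 ▸ h1)
    have := hd.dense_image i.continuous hFunion
    refine this.mono ?_
    rintro _ ⟨x, hx, rfl⟩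
    obtain ⟨n, hn⟩ := Set.mem_iUnion.mp hx
    exact Set.mem_iUnion.mpr ⟨n, ⟨x, hn, rfl⟩⟩
  -- pointwise convergence, in quantitative form
  have hpt : ∀ x : E₀, ∀ ε > (0:ℝ), ∃ N, ∀ n ≥ N, ‖i (P n x) - x‖ < ε := by
    intro x ε hε
    obtain ⟨y, hy, hxy⟩ : ∃ y ∈ ⋃ n, (G n : Set E₀), dist x y < ε := by
      have := Metric.mem_closure_iff.mp (hdense x) ε hε
      obtain ⟨y, hy1, hy2⟩ := this
      exact ⟨y, hy1, hy2⟩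
    obtain ⟨N, hN⟩ := Set.mem_iUnion.mp hy
    refine ⟨N, fun n hn => ?_⟩
    rw [hkey, norm_sub_rev]
    calc ‖x - (Submodule.orthogonalProjection (G n) x : E₀)‖ ≤ ‖x - y‖ :=
          aux_proj_le x (hGmono hn hN)
      _ < ε := by rwa [← dist_eq_norm]
  -- Lipschitz estimate, uniform in `n`
  have hlip : ∀ n, ∀ x y : E₀, ‖i (P n x) - x‖ ≤ ‖i (P n y) - y‖ + 2 * ‖x - y‖ := by
    intro n x y
    have h1 : ‖(Submodule.orthogonalProjection (G n) (x - y) : E₀)‖ ≤ ‖x - y‖ := by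
      calc ‖(Submodule.orthogonalProjection (G n) (x - y) : E₀)‖
          ≤ ‖Submodule.orthogonalProjection (G n)‖ * ‖x - y‖ :=
            (Submodule.orthogonalProjection (G n)).le_opNorm _
        _ ≤ 1 * ‖x - y‖ := by
            exact mul_le_mul_of_nonneg_right (Submodule.orthogonalProjectionOnto_norm_le _) (norm_nonneg _)
        _ = ‖x - y‖ := one_mul _
    have h2 : i (P n x) - x = (i (P n y) - y) + ((Submodule.orthogonalProjection (G n) (x - y) : E₀)
        - (x - y)) := by
      rw [hkey, hkey, map_sub]
      push_cast
      abel
    calc ‖i (P n x) - x‖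
        ≤ ‖i (P n y) - y‖ + ‖(Submodule.orthogonalProjection (G n) (x - y) : E₀) - (x - y)‖ := by
          rw [h2]; exact norm_add_le _ _
      _ ≤ ‖i (P n y) - y‖ + (‖(Submodule.orthogonalProjection (G n) (x - y) : E₀)‖ + ‖x - y‖) := by
          gcongr; exact norm_sub_le _ _
      _ ≤ ‖i (P n y) - y‖ + (‖x - y‖ + ‖x - y‖) := by gcongr
      _ = ‖i (P n y) - y‖ + 2 * ‖x - y‖ := by ring
  refine ⟨P, ?_, ?_⟩
  · intro x
    rw [Metric.tendsto_atTop]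
    intro ε hε
    obtain ⟨N, hN⟩ := hpt x ε hε
    refine ⟨N, fun n hn => ?_⟩
    rw [Real.dist_eq, sub_zero, abs_of_nonneg (norm_nonneg _)]
    exact hN n hn
  · intro K hK ε hε
    -- cover K by finitely many balls of radius ε/4
    obtain ⟨t, htK, hcov⟩ := hK.elim_nhds_subcover (fun c => Metric.ball c (ε / 4))
      (fun c _ => Metric.ball_mem_nhds c (by linarith))
    choose N hN using fun c : E₀ => hpt c (ε / 2) (by linarith)
    refine ⟨t.sup N, fun n hn x hx => ?_⟩
    obtain ⟨c, hct, hc⟩ := Set.mem_iUnion₂.mp (hcov hx)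
    have h1 : ‖i (P n c) - c‖ < ε / 2 :=
      hN c n (le_trans (Finset.le_sup hct) hn)
    have h2 : ‖x - c‖ < ε / 4 := by
      rw [← dist_eq_norm]; exact hc
    calc ‖i (P n x) - x‖ ≤ ‖i (P n c) - c‖ + 2 * ‖x - c‖ := hlip n x c
      _ < ε / 2 + 2 * (ε / 4) := by gcongr
      _ = ε := by ring
end
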